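/- For natural numbers i ≥ 1, the sum Σ_{j=1}^{i−1} 2^{i−j−1}·n_j with n_j = (⌊(j+2)/4⌋+2)·2^{j/2} for j even and n_j = (⌊j/4⌋+2)·2^{(j+1)/2} for j odd satisfies Σ_{j=1}^{i−1} 2^{i−j−1} n_j / 2^{i+2} → 1 as i → ∞; in particular (with g_i = 1 + Σ) the ratio of the number of split points 6·2^i to g_i tends to 3/2. -/

import Mathlib

open Filter

/-- nat value of n -/
def mm (j : ℕ) : ℕ := if Even j then ((j+2)/4+2)*2^(j/2) else (j/4+2)*2^((j+1)/2)

/-- deficiency 2^(i+2) - S i -/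
def dd (i : ℕ) : ℕ := if Even i then (i/2+5)*2^(i/2) else (8 + (i-1)/2 + (i-1)/2/2)*2^((i-1)/2)

lemma dd_rec (i : ℕ) : dd (i+1) + mm i = 2 * dd i := by
  rcases Nat.even_or_odd i with ⟨k, hk⟩ | ⟨k, hk⟩
  · subst hk
    have he : Even (k + k) := ⟨k, rfl⟩
    have ho : ¬ Even (k + k + 1) := by simp [Nat.even_add_one, he]
    simp only [dd, mm, if_pos he, if_neg ho]
    have h1 : (k + k + 1 - 1)/2 = k := by omega
    have h2 : (k + k)/2 = k := by omega
    rw [h1, h2]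
    have hc : (8 + k + k/2) + ((k + k + 2)/4 + 2) = 2 * (k + 5) := by omega
    calc (8 + k + k/2) * 2^k + ((k + k + 2)/4 + 2) * 2^k
        = ((8 + k + k/2) + ((k + k + 2)/4 + 2)) * 2^k := by ring
      _ = 2 * ((k + 5) * 2^k) := by rw [hc]; ring
  · subst hk
    have ho : ¬ Even (2*k + 1) := by simp [Nat.even_add_one]
    have he : Even (2*k + 1 + 1) := ⟨k+1, by ring⟩
    simp only [dd, mm, if_pos he, if_neg ho]
    have h1 : (2*k + 1 + 1)/2 = k + 1 := by omega
    have h2 : (2*k + 1 - 1)/2 = k := by omega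
    rw [h1, h2]
    have hc : (k + 1 + 5) + ((2*k+1)/4 + 2) = 8 + k + k/2 := by omega
    calc (k + 1 + 5) * 2^(k+1) + ((2*k+1)/4 + 2) * 2^(k+1)
        = ((k + 1 + 5) + ((2*k+1)/4 + 2)) * 2^(k+1) := by ring
      _ = 2 * ((8 + k + k/2) * 2^k) := by rw [hc]; ring

lemma dd_le (i : ℕ) : dd i ≤ (i+8) * 2^(i/2) := by
  rcases Nat.even_or_odd i with ⟨k, hk⟩ | ⟨k, hk⟩ <;> subst hk
  · have he : Even (k + k) := ⟨k, rfl⟩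
    simp only [dd, if_pos he]
    exact Nat.mul_le_mul_right _ (by omega)
  · have ho : ¬ Even (2*k + 1) := by simp [Nat.even_add_one]
    simp only [dd, if_neg ho]
    have h2 : (2*k + 1 - 1)/2 = k := by omega
    have h3 : (2*k + 1)/2 = k := by omega
    rw [h2, h3]
    exact Nat.mul_le_mul_right _ (by omega)

theorem stmt_19 (n : ℕ → ℝ)
    (hne : ∀ j, Even j → n j = (((j + 2) / 4 + 2 : ℕ) : ℝ) * 2 ^ (j / 2))
    (hno : ∀ j, Odd j → n j = ((j / 4 + 2 : ℕ) : ℝ) * 2 ^ ((j + 1) / 2))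
    (g : ℕ → ℝ)
    (hg : ∀ i, g i = 1 + ∑ j ∈ Finset.Icc 1 (i - 1), 2 ^ (i - j - 1) * n j) :
    Filter.Tendsto
      (fun i => (∑ j ∈ Finset.Icc 1 (i - 1), 2 ^ (i - j - 1) * n j) / 2 ^ (i + 2))
      Filter.atTop (nhds 1) ∧
    Filter.Tendsto (fun i => (6 * 2 ^ i) / g i) Filter.atTop (nhds (3 / 2)) := by
  have hnm : ∀ j, n j = (mm j : ℝ) := by
    intro j
    rcases Nat.even_or_odd j with hj | hj
    · rw [hne j hj, mm, if_pos hj]; push_cast; ring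
    · rw [hno j hj, mm, if_neg (Nat.not_even_iff_odd.mpr hj)]; push_cast; ring
  -- closed form
  have key : ∀ i, 1 ≤ i →
      (∑ j ∈ Finset.Icc 1 (i - 1), 2 ^ (i - j - 1) * n j) = 2^(i+2) - (dd i : ℝ) := by
    intro i hi
    induction i, hi using Nat.le_induction with
    | base => simp [dd]; norm_num
    | succ i hi ih =>
      have hins : Finset.Icc 1 (i + 1 - 1) = insert i (Finset.Icc 1 (i-1)) := by
        ext x; simp only [Finset.mem_Icc, Finset.mem_insert]; omega
      rw [hins, Finset.sum_insert (by simp only [Finset.mem_Icc]; omega)]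
      have hcong : ∀ j ∈ Finset.Icc 1 (i-1),
          (2:ℝ) ^ (i + 1 - j - 1) * n j = 2 * (2 ^ (i - j - 1) * n j) := by
        intro j hj
        simp only [Finset.mem_Icc] at hj
        have : i + 1 - j - 1 = (i - j - 1) + 1 := by omega
        rw [this, pow_succ]; ring
      rw [Finset.sum_congr rfl hcong, ← Finset.mul_sum, ih]
      have hrec := dd_rec i
      have hrecR : (dd (i+1) : ℝ) + (mm i : ℝ) = 2 * (dd i : ℝ) := by exact_mod_cast hrec
      have hii : i + 1 - i - 1 = 0 := by omega
      rw [hii, hnm i]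
      have hp : (2:ℝ)^(i+1+2) = 2 * 2^(i+2) := by ring
      rw [pow_zero, hp]
      linarith
  -- deficiency ratio tends to 0
  have hdiv2 : Tendsto (fun i : ℕ => i / 2) atTop atTop :=
    tendsto_atTop_atTop.2 fun b => ⟨2*b, fun a ha => by omega⟩
  have hf : Tendsto (fun k : ℕ => ((2*k+9 : ℕ) : ℝ)/2^k) atTop (nhds 0) := by
    have h1 : Tendsto (fun k : ℕ => (k:ℝ) * (1/2:ℝ)^k) atTop (nhds 0) :=
      tendsto_self_mul_const_pow_of_lt_one (by norm_num) (by norm_num)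
    have h2 : Tendsto (fun k : ℕ => ((1:ℝ)/2)^k) atTop (nhds 0) :=
      tendsto_pow_atTop_nhds_zero_of_lt_one (by norm_num) (by norm_num)
    have h3 : Tendsto (fun k : ℕ => 2 * ((k:ℝ) * (1/2:ℝ)^k) + 9 * ((1/2:ℝ)^k)) atTop
        (nhds (2 * 0 + 9 * 0)) := ((h1.const_mul 2).add (h2.const_mul 9))
    rw [show (2:ℝ) * 0 + 9 * 0 = 0 by norm_num] at h3
    refine h3.congr fun k => ?_
    push_cast
    rw [div_pow, one_pow]
    field_simp
  have hzero : Tendsto (fun i : ℕ => (dd i : ℝ) / 2^(i+2)) atTop (nhds 0) := by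
    apply squeeze_zero (fun i => by positivity)
      (g := fun i => ((2*(i/2)+9 : ℕ) : ℝ)/2^(i/2))
    · intro i
      rw [div_le_div_iff₀ (by positivity) (by positivity)]
      have hnat : dd i * 2^(i/2) ≤ (2*(i/2)+9) * 2^(i+2) := by
        calc dd i * 2^(i/2) ≤ ((i+8) * 2^(i/2)) * 2^(i/2) :=
              Nat.mul_le_mul_right _ (dd_le i)
          _ = (i+8) * 2^(i/2 + i/2) := by rw [pow_add]; ring
          _ ≤ (2*(i/2)+9) * 2^(i+2) :=
              Nat.mul_le_mul (by omega) (Nat.pow_le_pow_right (by norm_num) (by omega))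
      exact_mod_cast hnat
    · exact hf.comp hdiv2
  have partA : Tendsto
      (fun i => (∑ j ∈ Finset.Icc 1 (i - 1), (2:ℝ) ^ (i - j - 1) * n j) / 2 ^ (i + 2))
      atTop (nhds 1) := by
    have h1 : Tendsto (fun i : ℕ => 1 - (dd i : ℝ)/2^(i+2)) atTop (nhds (1 - 0)) :=
      tendsto_const_nhds.sub hzero
    rw [sub_zero] at h1
    refine h1.congr' ?_
    filter_upwards [eventually_ge_atTop 1] with i hi
    rw [key i hi]
    field_simp
  constructor
  · exact partA
  · have hg4 : Tendsto (fun i : ℕ => g i / 2^i) atTop (nhds 4) := by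
      have h0 : Tendsto (fun i : ℕ => ((1:ℝ)/2)^i) atTop (nhds 0) :=
        tendsto_pow_atTop_nhds_zero_of_lt_one (by norm_num) (by norm_num)
      have h1 : Tendsto (fun i : ℕ => ((1:ℝ)/2)^i
          + 4 * ((∑ j ∈ Finset.Icc 1 (i - 1), (2:ℝ) ^ (i - j - 1) * n j) / 2 ^ (i + 2)))
          atTop (nhds (0 + 4 * 1)) := h0.add (partA.const_mul 4)
      rw [show (0:ℝ) + 4 * 1 = 4 by norm_num] at h1
      refine h1.congr fun i => ?_
      rw [hg i]
      have hp : (2:ℝ)^(i+2) = 4 * 2^i := by ring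
      have hpos : (0:ℝ) < 2^i := by positivity
      rw [hp]
      field_simp
      rw [← mul_pow, one_div, inv_mul_cancel₀ two_ne_zero, one_pow]
    have hdiv : Tendsto (fun i : ℕ => (6:ℝ) / (g i / 2^i)) atTop (nhds (6/4)) :=
      tendsto_const_nhds.div hg4 (by norm_num)
    rw [show (6:ℝ)/4 = 3/2 by norm_num] at hdiv
    refine hdiv.congr fun i => ?_
    rw [div_div_eq_mul_div]
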